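/- With notation as above (N ⊇ ℤ^n a lattice in ℚ^n with ψ(N) ⊆ ℤ, ψ = Σ x_i, σ = (ℝ_{≥0})^n, B = N ∩ [0,1)^n), the following identity of formal power series in t holds: Σ_{v ∈ N∩σ} t^{ψ(v)} = (Σ_{b ∈ B} t^{ψ(b)}) · (1/(1-t))^n. Consequently (1 - t)^n · Σ_{v ∈ N∩σ} t^{ψ(v)} = Σ_{b ∈ B} t^{ψ(b)}, a polynomial with nonnegative integer coefficients. -/

import Mathlib

open PowerSeries


lemma natCard_sigma {ι : Type*} [Fintype ι] (f : ι → Type*) [∀ i, Finite (f i)] :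
    Nat.card (Σ i, f i) = ∑ i, Nat.card (f i) := by
  have : ∀ i, Fintype (f i) := fun i => Fintype.ofFinite _
  simp [Nat.card_eq_fintype_card]

lemma natCard_eq_sum_fibers {X : Type*} [Finite X] (s : ℕ) (g : X → Fin (s+1)) :
    Nat.card X = ∑ k : Fin (s+1), Nat.card {x // g x = k} := by
  rw [← natCard_sigma]
  exact Nat.card_congr (Equiv.sigmaFiberEquiv g).symm

instance finiteM (n j : ℕ) : Finite {m : Fin n → ℕ // ∑ i, m i = j} := by
  apply Finite.of_injective (fun m => (fun i => (⟨m.val i, by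
    have h1 : m.val i ≤ ∑ i, m.val i := Finset.single_le_sum (f := fun i => m.val i)
      (fun _ _ => Nat.zero_le _) (Finset.mem_univ i)
    have h2 := m.property
    omega⟩ : Fin (j+1))) : _ → Fin n → Fin (j+1))
  intro a b h
  ext i
  exact congrArg Fin.val (congrFun h i)

noncomputable def Cser (n : ℕ) : ℚ⟦X⟧ :=
  mk fun j => (Nat.card {m : Fin n → ℕ // ∑ i, m i = j} : ℚ)

lemma Cser_zero : Cser 0 = 1 := by
  ext j
  rw [Cser, coeff_mk]
  cases j with
  | zero =>
    haveI : Unique {m : Fin 0 → ℕ // ∑ i, m i = 0} :=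
      ⟨⟨⟨fun i => 0, by simp⟩⟩, fun a => Subtype.ext (funext fun i => i.elim0)⟩
    simp
  | succ j =>
    haveI : IsEmpty {m : Fin 0 → ℕ // ∑ i, m i = j + 1} := by
      constructor; rintro ⟨m, hm⟩; simp at hm
    simp

def fiberEquivM (n s : ℕ) (k : Fin (s+1)) :
    {x : {m : Fin (n+1) → ℕ // ∑ i, m i = s} // x.val 0 = k.val} ≃
      {m : Fin n → ℕ // ∑ i, m i = s - k.val} where
  toFun x := ⟨Fin.tail x.val.val, by
    have hs := x.val.property
    rw [Fin.sum_univ_succ] at hs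
    have h0 := x.property
    show ∑ i : Fin n, x.val.val i.succ = s - k.val
    omega⟩
  invFun t := ⟨⟨Fin.cons k.val t.val, by
    rw [Fin.sum_univ_succ]
    simp only [Fin.cons_zero, Fin.cons_succ]
    have hk : (k : ℕ) ≤ s := Nat.lt_succ_iff.mp k.isLt
    have := t.property
    omega⟩, rfl⟩
  left_inv x := by
    apply Subtype.ext; apply Subtype.ext
    have h0 := x.property
    conv_rhs => rw [← Fin.cons_self_tail (x.val.val)]
    rw [h0]
  right_inv t := by
    apply Subtype.ext
    funext i
    simp [Fin.tail_cons]

lemma cardM_succ (n s : ℕ) :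
    Nat.card {m : Fin (n+1) → ℕ // ∑ i, m i = s} =
      ∑ k ∈ Finset.range (s+1), Nat.card {m : Fin n → ℕ // ∑ i, m i = s - k} := by
  rw [Finset.sum_range, natCard_eq_sum_fibers s (fun m => (⟨m.val 0, by
    have h1 : m.val 0 ≤ ∑ i, m.val i := Finset.single_le_sum (f := fun i => m.val i)
      (fun _ _ => Nat.zero_le _) (Finset.mem_univ 0)
    have h2 := m.property
    omega⟩ : Fin (s+1)))]
  refine Finset.sum_congr rfl fun k _ => ?_
  refine Nat.card_congr ((Equiv.subtypeEquivRight ?_).trans (fiberEquivM n s k))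
  intro x
  exact ⟨fun h => congrArg Fin.val h, fun h => Fin.ext (by simpa using h)⟩

lemma Cser_succ (n : ℕ) : Cser (n+1) = (mk fun _ => (1:ℚ)) * Cser n := by
  ext s
  rw [Cser, coeff_mk, coeff_mul, Finset.Nat.sum_antidiagonal_eq_sum_range_succ_mk,
    cardM_succ]
  simp only [coeff_mk, one_mul, Cser]
  push_cast
  rfl

lemma Cser_eq (n : ℕ) : Cser n = (mk fun _ => (1:ℚ)) ^ n := by
  induction n with
  | zero => simpa using Cser_zero
  | succ n ih => rw [Cser_succ, ih, pow_succ, mul_comm]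


section Main
variable {n : ℕ} {N : AddSubgroup (Fin n → ℚ)}

lemma finiteA (hfin : ∃ d : ℕ, 0 < d ∧ ∀ v ∈ N, ∀ i, ∃ z : ℤ, v i * d = (z : ℚ)) (s : ℕ) :
    Finite {v : Fin n → ℚ // v ∈ N ∧ (∀ i, 0 ≤ v i) ∧ ∑ i, v i = (s : ℚ)} := by
  obtain ⟨d, hd, hdiv⟩ := hfin
  apply Finite.of_injective (fun v => (fun i => (⟨(⌊v.val i * d⌋).toNat, by
    obtain ⟨hmem, hpos, hsum⟩ := v.property
    have hle : v.val i ≤ (s : ℚ) :=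
      le_trans (Finset.single_le_sum (f := fun i => v.val i) (fun j _ => hpos j)
        (Finset.mem_univ i)) (le_of_eq hsum)
    have h2 : v.val i * d ≤ (s : ℚ) * d := by
      apply mul_le_mul_of_nonneg_right hle (by positivity)
    have h3 : ⌊v.val i * d⌋ ≤ ((s * d : ℕ) : ℤ) := by
      calc ⌊v.val i * d⌋ ≤ ⌊((s * d : ℕ) : ℚ)⌋ := Int.floor_mono (by push_cast; exact h2)
        _ = ((s * d : ℕ) : ℤ) := Int.floor_natCast _
    omega⟩ : Fin (s * d + 1))) : _ → Fin n → Fin (s * d + 1))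
  intro a b h
  apply Subtype.ext
  funext i
  have ha := (a.property.1)
  have hb := (b.property.1)
  obtain ⟨za, hza⟩ := hdiv a.val ha i
  obtain ⟨zb, hzb⟩ := hdiv b.val hb i
  have hfa : ⌊a.val i * d⌋ = za := by rw [hza]; exact Int.floor_intCast za
  have hfb : ⌊b.val i * d⌋ = zb := by rw [hzb]; exact Int.floor_intCast zb
  have := congrArg Fin.val (congrFun h i)
  simp only [hfa, hfb] at this
  have hz : za = zb := by
    have h0a : (0:ℚ) ≤ a.val i * d := mul_nonneg (a.property.2.1 i) (by positivity)
    have h0b : (0:ℚ) ≤ b.val i * d := mul_nonneg (b.property.2.1 i) (by positivity)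
    rw [hza] at h0a; rw [hzb] at h0b
    have h0a' : (0:ℤ) ≤ za := by exact_mod_cast h0a
    have h0b' : (0:ℤ) ≤ zb := by exact_mod_cast h0b
    omega
  have : a.val i * d = b.val i * d := by rw [hza, hzb, hz]
  have hd' : (d : ℚ) ≠ 0 := by positivity
  exact mul_right_cancel₀ hd' this

lemma finiteB (hfin : ∃ d : ℕ, 0 < d ∧ ∀ v ∈ N, ∀ i, ∃ z : ℤ, v i * d = (z : ℚ)) (k : ℕ) :
    Finite {b : Fin n → ℚ // b ∈ N ∧ (∀ i, 0 ≤ b i ∧ b i < 1) ∧ ∑ i, b i = (k : ℚ)} := by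
  haveI := finiteA (N := N) hfin k
  apply Finite.of_injective (fun b =>
    (⟨b.val, b.property.1, fun i => (b.property.2.1 i).1, b.property.2.2⟩ :
      {v : Fin n → ℚ // v ∈ N ∧ (∀ i, 0 ≤ v i) ∧ ∑ i, v i = (k : ℚ)}))
  intro a b h
  exact Subtype.ext (congrArg Subtype.val h :)



section Main
variable {n : ℕ} {N : AddSubgroup (Fin n → ℚ)}

lemma fract_mem (hZ : ∀ x : Fin n → ℤ, (fun i => (x i : ℚ)) ∈ N)
    {v : Fin n → ℚ} (hv : v ∈ N) : (fun i => Int.fract (v i)) ∈ N := by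
  have h := N.sub_mem hv (hZ (fun i => ⌊v i⌋))
  have : (fun i => Int.fract (v i)) = v - (fun i => ((⌊v i⌋ : ℤ) : ℚ)) := by
    funext i
    show Int.fract (v i) = v i - ((⌊v i⌋ : ℤ) : ℚ)
    rw [Int.self_sub_floor]
  rw [this]
  exact h

lemma floorsum_le {s : ℕ} {v : Fin n → ℚ} (hsum : ∑ i, v i = (s : ℚ)) :
    ∑ i, ⌊v i⌋ ≤ (s : ℤ) := by
  have h : ((∑ i, ⌊v i⌋ : ℤ) : ℚ) ≤ (s : ℚ) := by
    push_cast
    exact le_trans (Finset.sum_le_sum fun i _ => Int.floor_le _) (le_of_eq hsum)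
  exact_mod_cast h

lemma floorsum_nonneg {v : Fin n → ℚ} (hpos : ∀ i, 0 ≤ v i) :
    (0 : ℤ) ≤ ∑ i, ⌊v i⌋ :=
  Finset.sum_nonneg fun i _ => Int.floor_nonneg.mpr (hpos i)

lemma fractsum_eq {s : ℕ} {v : Fin n → ℚ} (hsum : ∑ i, v i = (s : ℚ)) :
    ∑ i, Int.fract (v i) = (s : ℚ) - ((∑ i, ⌊v i⌋ : ℤ) : ℚ) := by
  have : ∀ i ∈ Finset.univ, Int.fract (v i) = v i - ((⌊v i⌋ : ℤ) : ℚ) :=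
    fun i _ => (Int.self_sub_floor (v i)).symm
  rw [Finset.sum_congr rfl this, Finset.sum_sub_distrib, hsum]
  push_cast
  ring

/-- The fiber equivalence for the main decomposition. -/
noncomputable def fiberEquivA
    (hZ : ∀ x : Fin n → ℤ, (fun i => (x i : ℚ)) ∈ N) (s : ℕ) (k : Fin (s+1)) :
    {x : {v : Fin n → ℚ // v ∈ N ∧ (∀ i, 0 ≤ v i) ∧ ∑ i, v i = (s : ℚ)} //
        s - (∑ i, ⌊x.val i⌋).toNat = k.val} ≃
      {b : Fin n → ℚ // b ∈ N ∧ (∀ i, 0 ≤ b i ∧ b i < 1) ∧ ∑ i, b i = ((k : ℕ) : ℚ)} ×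
        {m : Fin n → ℕ // ∑ i, m i = s - (k : ℕ)} where
  toFun x := by
    obtain ⟨⟨v, hmem, hpos, hsum⟩, hfib⟩ := x
    have hF0 : (0 : ℤ) ≤ ∑ i, ⌊v i⌋ := floorsum_nonneg hpos
    have hFs : ∑ i, ⌊v i⌋ ≤ (s : ℤ) := floorsum_le hsum
    have hj : (∑ i, ⌊v i⌋).toNat ≤ s := by omega
    have hk : (k : ℕ) ≤ s := Nat.lt_succ_iff.mp k.isLt
    have hjk : (∑ i, ⌊v i⌋).toNat = s - (k : ℕ) := by
      simp only at hfib; omega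
    have hFF : (∑ i, ⌊v i⌋) = ((s - (k : ℕ) : ℕ) : ℤ) := by omega
    refine ⟨⟨fun i => Int.fract (v i), fract_mem hZ hmem,
      fun i => ⟨Int.fract_nonneg _, Int.fract_lt_one _⟩, ?_⟩,
      ⟨fun i => (⌊v i⌋).toNat, ?_⟩⟩
    · rw [fractsum_eq hsum, hFF]
      push_cast [Nat.cast_sub hk]
      ring
    · have hc : ((∑ i, (⌊v i⌋).toNat : ℕ) : ℤ) = ∑ i, ⌊v i⌋ := by
        push_cast
        exact Finset.sum_congr rfl fun i _ =>
          Int.toNat_of_nonneg (Int.floor_nonneg.mpr (hpos i))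
      have := hc.trans hFF
      exact_mod_cast this
  invFun bm := by
    obtain ⟨⟨b, hbmem, hbd, hbsum⟩, ⟨m, hmsum⟩⟩ := bm
    have hk : (k : ℕ) ≤ s := Nat.lt_succ_iff.mp k.isLt
    have hfloor : ∀ i, ⌊b i + ((m i : ℕ) : ℚ)⌋ = (m i : ℤ) := by
      intro i
      rw [Int.floor_add_natCast, Int.floor_eq_zero_iff.mpr ⟨(hbd i).1, (hbd i).2⟩, zero_add]
    refine ⟨⟨fun i => b i + (m i : ℚ), ?_, ?_, ?_⟩, ?_⟩
    · have h1 := N.add_mem hbmem (hZ (fun i => (m i : ℤ)))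
      have h2 : (fun i => b i + (m i : ℚ)) = b + (fun i => ((m i : ℤ) : ℚ)) := by
        funext i; simp
      rw [h2]; exact h1
    · intro i; exact add_nonneg (hbd i).1 (Nat.cast_nonneg _)
    · rw [Finset.sum_add_distrib, hbsum]
      have : ∑ i, ((m i : ℕ) : ℚ) = ((∑ i, m i : ℕ) : ℚ) := by push_cast; rfl
      rw [this, hmsum]
      push_cast [Nat.cast_sub hk]
      ring
    · simp only
      have hFm : (∑ i, ⌊b i + ((m i : ℕ) : ℚ)⌋) = ((∑ i, m i : ℕ) : ℤ) := by
        rw [Finset.sum_congr rfl fun i _ => hfloor i]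
        push_cast; rfl
      rw [hFm, hmsum]
      simp only [Int.toNat_natCast]
      omega
  left_inv x := by
    obtain ⟨⟨v, hmem, hpos, hsum⟩, hfib⟩ := x
    apply Subtype.ext; apply Subtype.ext
    funext i
    show Int.fract (v i) + ((⌊v i⌋.toNat : ℕ) : ℚ) = v i
    have h0 : (0 : ℤ) ≤ ⌊v i⌋ := Int.floor_nonneg.mpr (hpos i)
    have : ((⌊v i⌋.toNat : ℕ) : ℚ) = ((⌊v i⌋ : ℤ) : ℚ) := by
      exact_mod_cast Int.toNat_of_nonneg h0
    rw [this, Int.fract_add_floor]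
  right_inv bm := by
    obtain ⟨⟨b, hbmem, hbd, hbsum⟩, ⟨m, hmsum⟩⟩ := bm
    have hfloor : ∀ i, ⌊b i + ((m i : ℕ) : ℚ)⌋ = (m i : ℤ) := by
      intro i
      rw [Int.floor_add_natCast, Int.floor_eq_zero_iff.mpr ⟨(hbd i).1, (hbd i).2⟩, zero_add]
    refine Prod.ext ?_ ?_
    · apply Subtype.ext
      funext i
      show Int.fract (b i + ((m i : ℕ) : ℚ)) = b i
      rw [Int.fract_add_natCast, Int.fract_eq_self.mpr ⟨(hbd i).1, (hbd i).2⟩]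
    · apply Subtype.ext
      funext i
      show (⌊b i + ((m i : ℕ) : ℚ)⌋).toNat = m i
      rw [hfloor i, Int.toNat_natCast]



lemma cardA_eq (hZ : ∀ x : Fin n → ℤ, (fun i => (x i : ℚ)) ∈ N)
    (hfin : ∃ d : ℕ, 0 < d ∧ ∀ v ∈ N, ∀ i, ∃ z : ℤ, v i * d = (z : ℚ)) (s : ℕ) :
    Nat.card {v : Fin n → ℚ // v ∈ N ∧ (∀ i, 0 ≤ v i) ∧ ∑ i, v i = (s : ℚ)} =
      ∑ k ∈ Finset.range (s+1),
        Nat.card {b : Fin n → ℚ // b ∈ N ∧ (∀ i, 0 ≤ b i ∧ b i < 1) ∧ ∑ i, b i = (k : ℚ)} *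
          Nat.card {m : Fin n → ℕ // ∑ i, m i = s - k} := by
  haveI := finiteA (N := N) hfin s
  haveI : ∀ k : ℕ, Finite {b : Fin n → ℚ // b ∈ N ∧ (∀ i, 0 ≤ b i ∧ b i < 1) ∧
      ∑ i, b i = (k : ℚ)} := fun k => finiteB (N := N) hfin k
  rw [Finset.sum_range, natCard_eq_sum_fibers s
    (fun x => (⟨s - (∑ i, ⌊x.val i⌋).toNat, Nat.lt_succ_of_le (Nat.sub_le _ _)⟩ : Fin (s+1)))]
  refine Finset.sum_congr rfl fun k _ => ?_
  rw [← Nat.card_prod]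
  refine Nat.card_congr ((Equiv.subtypeEquivRight ?_).trans (fiberEquivA hZ s k))
  intro x
  exact ⟨fun h => congrArg Fin.val h, fun h => Fin.ext (by simpa using h)⟩

end Main

/-- With `N ⊇ ℤ^n` a finite-index lattice in `ℚ^n` on which `ψ = Σ xᵢ` takes
integer values, `σ` the positive orthant, `B = N ∩ [0,1)^n`:
`Σ_{v ∈ N∩σ} t^{ψ(v)} = (Σ_{b∈B} t^{ψ(b)})·(1/(1-t))^n` in `ℚ[[t]]`, and
consequently `(1-t)^n · Σ_{v ∈ N∩σ} t^{ψ(v)} = Σ_{b∈B} t^{ψ(b)}`. -/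
theorem stmt_14 (n : ℕ) (N : AddSubgroup (Fin n → ℚ))
    (hZ : ∀ x : Fin n → ℤ, (fun i => (x i : ℚ)) ∈ N)
    (hfin : ∃ d : ℕ, 0 < d ∧ ∀ v ∈ N, ∀ i, ∃ z : ℤ, v i * d = (z : ℚ))
    (hψ : ∀ v ∈ N, ∃ z : ℤ, ∑ i, v i = (z : ℚ)) :
    (PowerSeries.mk fun s => (Nat.card {v : Fin n → ℚ //
        v ∈ N ∧ (∀ i, 0 ≤ v i) ∧ ∑ i, v i = (s : ℚ)} : ℚ)) =
      (PowerSeries.mk fun s => (Nat.card {b : Fin n → ℚ //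
        b ∈ N ∧ (∀ i, 0 ≤ b i ∧ b i < 1) ∧ ∑ i, b i = (s : ℚ)} : ℚ)) *
      ((1 - (X : PowerSeries ℚ))⁻¹) ^ n ∧
    (1 - (X : PowerSeries ℚ)) ^ n *
      (PowerSeries.mk fun s => (Nat.card {v : Fin n → ℚ //
        v ∈ N ∧ (∀ i, 0 ≤ v i) ∧ ∑ i, v i = (s : ℚ)} : ℚ)) =
      (PowerSeries.mk fun s => (Nat.card {b : Fin n → ℚ //
        b ∈ N ∧ (∀ i, 0 ≤ b i ∧ b i < 1) ∧ ∑ i, b i = (s : ℚ)} : ℚ)) := by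
  classical
  have key : (PowerSeries.mk fun s => (Nat.card {v : Fin n → ℚ //
        v ∈ N ∧ (∀ i, 0 ≤ v i) ∧ ∑ i, v i = (s : ℚ)} : ℚ)) =
      (PowerSeries.mk fun s => (Nat.card {b : Fin n → ℚ //
        b ∈ N ∧ (∀ i, 0 ≤ b i ∧ b i < 1) ∧ ∑ i, b i = (s : ℚ)} : ℚ)) * Cser n := by
    ext s
    rw [coeff_mk, coeff_mul, Finset.Nat.sum_antidiagonal_eq_sum_range_succ_mk,
      cardA_eq hZ hfin s]
    simp only [coeff_mk, Cser]
    push_cast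
    rfl
  have hone : (mk fun _ => (1:ℚ)) * (1 - X) = 1 := mk_one_mul_one_sub_eq_one ℚ
  have hCinv : ((1 - X : ℚ⟦X⟧))⁻¹ = mk fun _ => (1:ℚ) := by
    rw [PowerSeries.inv_eq_iff_mul_eq_one]
    · exact hone
    · simp
  constructor
  · rw [key, Cser_eq, hCinv]
  · rw [key, Cser_eq]
    have h2 : (1 - X : ℚ⟦X⟧)^n *
        ((PowerSeries.mk fun s => (Nat.card {b : Fin n → ℚ //
          b ∈ N ∧ (∀ i, 0 ≤ b i ∧ b i < 1) ∧ ∑ i, b i = (s : ℚ)} : ℚ)) *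
          (mk fun _ => (1:ℚ))^n) =
        (PowerSeries.mk fun s => (Nat.card {b : Fin n → ℚ //
          b ∈ N ∧ (∀ i, 0 ≤ b i ∧ b i < 1) ∧ ∑ i, b i = (s : ℚ)} : ℚ)) *
          ((mk fun _ => (1:ℚ)) * (1 - X))^n := by rw [mul_pow]; ring
    rw [h2, hone, one_pow, mul_one]
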